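/- Assume G(m) is Buchsbaum. If i is an index with a_i > b_i, then ω_i ∈ maxAp_M(S), i.e. ω_i is a maximal element of the Apery set Ap_{g_1}(S) with respect to the partial order ≤_M. -/

import Mathlib

/-!
Common setup: the numerical semigroup ring `R = k[[t^S]]`, its maximal ideal `m`,
the associated graded ring `G(m)` (realized as the Rees algebra `R[mt]` modulo
the extension of `m`, the standard presentation of `⊕_{h≥0} m^h/m^{h+1}`),
the homogeneous maximal ideal `𝓜`, the reduction number `r`, initial forms
`t^s*`, Apery sets, the invariants `a_i`, `b_i`, `l_i`, the order function,
the partial order `≤_M`, symmetry, `M`-purity, Buchsbaumness and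
Cohen-Macaulayness (via their characterizations `(0:𝓜) = (0:𝓜^r)` and
`(0:𝓜^r) = 0` valid in this one-dimensional graded setting).
-/

set_option maxHeartbeats 1000000
set_option synthInstance.maxHeartbeats 1000000

open scoped Pointwise
open Polynomial

noncomputable section

namespace NumSgrp

/-- The numerical semigroup `S` generated by `g 0 < g 1 < ⋯ < g n`. -/
def S {n : ℕ} (g : Fin (n + 1) → ℕ) : AddSubmonoid ℕ := AddSubmonoid.closure (Set.range g)

/-- `setM g h` is the `h`-fold sumset `M + ⋯ + M` of the maximal ideal
`M = S \ {0}`; by convention `setM g 0 = S` (corresponding to `m^0 = R`). -/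
def setM {n : ℕ} (g : Fin (n + 1) → ℕ) : ℕ → Set ℕ
  | 0 => (S g : Set ℕ)
  | h+1 => ({u : ℕ | u ∈ S g ∧ u ≠ 0} + setM g h : Set ℕ)

/-- `ordS g s` = ord(s) = max { h | s ∈ hM }. -/
def ordS {n : ℕ} (g : Fin (n + 1) → ℕ) (s : ℕ) : ℕ := sSup {h | s ∈ setM g h}

/-- `ap g i` = ω_i, the least element of `S` congruent to `i` modulo `g 0`. -/
def ap {n : ℕ} (g : Fin (n + 1) → ℕ) (i : ℕ) : ℕ := sInf {s | s ∈ S g ∧ s % g 0 = i}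

/-- The Apery set `Ap_{g_1}(S) = {ω_0, …, ω_{g_1-1}}`. -/
def apSet {n : ℕ} (g : Fin (n + 1) → ℕ) : Set ℕ := {s | ∃ i < g 0, s = ap g i}

/-- The blow-up `S' = ⟨g_1, g_2 - g_1, …, g_n - g_1⟩`. -/
def S' {n : ℕ} (g : Fin (n + 1) → ℕ) : AddSubmonoid ℕ :=
  AddSubmonoid.closure (insert (g 0) (Set.range fun i => g i - g 0))

/-- `ap' g i` = ω'_i, the least element of `S'` congruent to `i` modulo `g 0`. -/
def ap' {n : ℕ} (g : Fin (n + 1) → ℕ) (i : ℕ) : ℕ := sInf {s | s ∈ S' g ∧ s % g 0 = i}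

/-- The Apery set `Ap_{g_1}(S') = {ω'_0, …, ω'_{g_1-1}}`. -/
def apSet' {n : ℕ} (g : Fin (n + 1) → ℕ) : Set ℕ := {s | ∃ i < g 0, s = ap' g i}

/-- `aa g i` = a_i, the unique integer with ω_i = ω'_i + a_i g_1. -/
def aa {n : ℕ} (g : Fin (n + 1) → ℕ) (i : ℕ) : ℕ := (ap g i - ap' g i) / g 0

/-- `bb g i` = b_i = ord(ω_i). -/
def bb {n : ℕ} (g : Fin (n + 1) → ℕ) (i : ℕ) : ℕ := ordS g (ap g i)

/-- The partial order `u ≤_M u'`: there is `s ∈ S` with `u + s = u'` and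
`ord u + ord s = ord u'`. -/
def leM {n : ℕ} (g : Fin (n + 1) → ℕ) (u v : ℕ) : Prop :=
  ∃ s ∈ S g, u + s = v ∧ ordS g u + ordS g s = ordS g v

/-- `maxAp_M(S)`: the maximal elements of the Apery set w.r.t. `≤_M`. -/
def maxAp {n : ℕ} (g : Fin (n + 1) → ℕ) : Set ℕ :=
  {u | u ∈ apSet g ∧ ∀ v ∈ apSet g, leM g u v → v = u}

/-- `S` is `M`-pure: all elements of `maxAp_M(S)` have the same order. -/
def MPure {n : ℕ} (g : Fin (n + 1) → ℕ) : Prop :=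
  ∀ u ∈ maxAp g, ∀ v ∈ maxAp g, ordS g u = ordS g v

/-- `S` viewed inside `ℤ`. -/
def SZ {n : ℕ} (g : Fin (n + 1) → ℕ) : Set ℤ := {x | ∃ s ∈ S g, (s : ℤ) = x}

/-- The Frobenius number `g(S) = max (ℤ \ S)`. -/
def frob {n : ℕ} (g : Fin (n + 1) → ℕ) : ℤ := sSup {x : ℤ | x ∉ SZ g}

/-- `S` is symmetric: for every `x ∈ ℤ`, `x ∉ S` implies `g(S) - x ∈ S`. -/
def IsSymm {n : ℕ} (g : Fin (n + 1) → ℕ) : Prop :=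
  ∀ x : ℤ, x ∉ SZ g → frob g - x ∈ SZ g

/-- Hypotheses: `g 0 < g 1 < ⋯ < g n` is a minimal system of generators with
gcd 1, so `S` is a numerical semigroup minimally generated by the `g i`. -/
structure MinGen {n : ℕ} (g : Fin (n + 1) → ℕ) : Prop where
  smono : StrictMono g
  minimal : ∀ i, g i ∉ AddSubmonoid.closure (Set.range g \ {g i})
  gcdeq : Finset.univ.gcd g = 1

variable (k : Type*) [Field k] {n : ℕ} (g : Fin (n + 1) → ℕ)

/-- `R = k[[t^S]]`: the subalgebra of `k[[t]]` of power series supported in `S`. -/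
def Rsub : Subalgebra k (PowerSeries k) where
  carrier := {f | ∀ i, PowerSeries.coeff (R := k) i f ≠ 0 → i ∈ S g}
  zero_mem' := by intro i hi; simp at hi
  one_mem' := by
    intro i hi
    by_cases h : i = 0
    · exact h ▸ (S g).zero_mem
    · rw [PowerSeries.coeff_one, if_neg h] at hi; exact absurd rfl hi
  add_mem' := by
    intro a b ha hb i hi
    rw [map_add] at hi
    by_cases h : PowerSeries.coeff (R := k) i a ≠ 0
    · exact ha i h
    · push_neg at h
      rw [h, zero_add] at hi
      exact hb i hi
  mul_mem' := by
    intro a b ha hb i hi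
    rw [PowerSeries.coeff_mul] at hi
    obtain ⟨p, hp, hne⟩ := Finset.exists_ne_zero_of_sum_ne_zero hi
    have h1 := ha p.1 (left_ne_zero_of_mul hne)
    have h2 := hb p.2 (right_ne_zero_of_mul hne)
    exact (Finset.HasAntidiagonal.mem_antidiagonal.mp hp) ▸ add_mem h1 h2
  algebraMap_mem' := by
    intro r i hi
    by_cases h : i = 0
    · exact h ▸ (S g).zero_mem
    · exfalso
      apply hi
      have : (algebraMap k (PowerSeries k)) r = PowerSeries.C (R := k) r := rfl
      rw [this, PowerSeries.coeff_C, if_neg h]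

open Classical in
/-- `t^s` as an element of `R` (defined to be `0` if `s ∉ S`). -/
def tR (s : ℕ) : Rsub k g :=
  if h : s ∈ S g then
    ⟨PowerSeries.monomial (R := k) s 1, by
      intro i hi
      rw [PowerSeries.coeff_monomial] at hi
      split at hi
      · next heq => exact heq ▸ h
      · exact absurd rfl hi⟩
  else 0

/-- `m = (t^{g_1}, …, t^{g_n})`, the maximal ideal of `R`. -/
def mI : Ideal (Rsub k g) := Ideal.span (Set.range fun i => tR k g (g i))

lemma tR_mul {s u : ℕ} (hs : s ∈ S g) (hu : u ∈ S g) :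
    tR k g (s + u) = tR k g s * tR k g u := by
  simp only [tR, dif_pos hs, dif_pos hu, dif_pos (add_mem hs hu)]
  apply Subtype.ext
  simp only [MulMemClass.coe_mul]
  show (PowerSeries.monomial (R := k) (s + u)) (1 : k) =
    (PowerSeries.monomial (R := k) s) 1 * (PowerSeries.monomial (R := k) u) 1
  rw [← PowerSeries.X_pow_eq, ← PowerSeries.X_pow_eq, ← PowerSeries.X_pow_eq, pow_add]

lemma setM_subset : ∀ h : ℕ, setM g h ⊆ (S g : Set ℕ) := by
  intro h
  induction h with
  | zero => exact fun s hs => hs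
  | succ h ih =>
    rintro s ⟨u, hu, v, hv, huv⟩
    have : u + v = s := huv
    exact this ▸ add_mem hu.1 (ih hv)

lemma le_of_mem_setM : ∀ h : ℕ, ∀ s ∈ setM g h, h ≤ s := by
  intro h
  induction h with
  | zero => exact fun s _ => Nat.zero_le s
  | succ h ih =>
    rintro s ⟨u, hu, v, hv, huv⟩
    have hsum : u + v = s := huv
    have h1 : 1 ≤ u := Nat.one_le_iff_ne_zero.mpr hu.2
    have h2 := ih v hv
    omega

lemma tR_mem_mI {u : ℕ} (hu : u ∈ S g) (hne : u ≠ 0) : tR k g u ∈ mI k g := by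
  have key : ∀ (x : ℕ) (_ : x ∈ S g), x = 0 ∨ tR k g x ∈ mI k g := by
    intro x hx
    induction hx using AddSubmonoid.closure_induction with
    | mem y hy =>
      obtain ⟨i, rfl⟩ := hy
      exact Or.inr (Ideal.subset_span ⟨i, rfl⟩)
    | zero => exact Or.inl rfl
    | add x y hx hy px py =>
      rcases px with rfl | px
      · rcases py with rfl | py
        · exact Or.inl rfl
        · exact Or.inr (by rwa [zero_add])
      · refine Or.inr ?_
        rw [tR_mul k g hx hy]
        exact Ideal.mul_mem_right _ _ px
  rcases key u hu with rfl | h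
  · exact absurd rfl hne
  · exact h

lemma tR_mem_pow_of_setM : ∀ h : ℕ, ∀ s ∈ setM g h, tR k g s ∈ (mI k g) ^ h := by
  intro h
  induction h with
  | zero =>
    intro s _
    rw [pow_zero, Ideal.one_eq_top]
    exact Submodule.mem_top
  | succ h ih =>
    rintro s ⟨u, hu, v, hv, huv⟩
    have hsum : u + v = s := huv
    rw [← hsum, tR_mul k g hu.1 (setM_subset g h hv), pow_succ, mul_comm (tR k g u)]
    exact Ideal.mul_mem_mul (ih v hv) (tR_mem_mI k g hu.1 hu.2)

lemma mem_setM_ordS {s : ℕ} (hs : s ∈ S g) : s ∈ setM g (ordS g s) := by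
  have : ordS g s ∈ {h | s ∈ setM g h} :=
    Nat.sSup_mem (⟨0, hs⟩ : Set.Nonempty {h | s ∈ setM g h})
      ⟨s, fun h hh => le_of_mem_setM g h s hh⟩
  exact this

lemma tR_mem_pow (s : ℕ) : tR k g s ∈ (mI k g) ^ (ordS g s) := by
  by_cases hs : s ∈ S g
  · exact tR_mem_pow_of_setM k g _ s (mem_setM_ordS g hs)
  · rw [tR, dif_neg hs]
    exact zero_mem _

/-- `G(m) = ⊕_{h ≥ 0} m^h/m^{h+1}`, realized as the Rees algebra `R[mt]`
modulo the extension of `m` (the standard presentation of the associated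
graded ring of a local ring). -/
abbrev grG : Type _ :=
  (reesAlgebra (mI k g)) ⧸
    (Ideal.map (algebraMap (Rsub k g) (reesAlgebra (mI k g))) (mI k g))

/-- The homogeneous maximal ideal `𝓜 = m/m² ⊕ m²/m³ ⊕ ⋯` of `G(m)`: the image
of the ideal of elements of the Rees algebra whose degree-0 coefficient lies
in `m`. -/
def MM : Ideal (grG k g) :=
  Ideal.map (Ideal.Quotient.mk _)
    (Ideal.comap ((Polynomial.evalRingHom (0 : Rsub k g)).comp
      (reesAlgebra (mI k g)).val.toRingHom) (mI k g))

/-- The reduction number `r` of `m`: the least `r` with `m^{r+1} = t^{g_1}·m^r`. -/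
def rnum : ℕ :=
  sInf {j | (mI k g) ^ (j + 1) = Ideal.span {tR k g (g 0)} * (mI k g) ^ j}

/-- The initial form `t^s*` of `t^s` in `G(m)`, i.e. the image of `t^s` in
`m^{ord(s)}/m^{ord(s)+1}` (the degree-`ord(s)` component of `G(m)`). -/
def tstar (s : ℕ) : grG k g :=
  Ideal.Quotient.mk _
    ⟨(Polynomial.monomial (ordS g s)) (tR k g s),
      reesAlgebra.monomial_mem.mpr (tR_mem_pow k g s)⟩

/-- `(0 :_{G(m)} 𝓜^r) = H⁰_𝓜(G(m))`. -/
def annM : Ideal (grG k g) := Submodule.colon ⊥ ((MM k g ^ rnum k g : Ideal (grG k g)) : Set (grG k g))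

/-- `(0 :_{G(m)} 𝓜)`. -/
def ann1 : Ideal (grG k g) := Submodule.colon ⊥ ((MM k g : Ideal (grG k g)) : Set (grG k g))

/-- `G(m)` is Buchsbaum iff `(0 :_{G(m)} 𝓜) = (0 :_{G(m)} 𝓜^r)`. -/
def IsBuchsbaum : Prop := ann1 k g = annM k g

/-- `G(m)` is Cohen-Macaulay iff `(0 :_{G(m)} 𝓜^r) = 0`. -/
def IsCM : Prop := annM k g = ⊥

/-- `l_i = max { l | t^{ω_i + l g_1}* ∈ (0 :_{G(m)} 𝓜^r) }`. -/
def lℓ (i : ℕ) : ℕ := sSup {l | tstar k g (ap g i + l * g 0) ∈ annM k g}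

/-- The length of a `G(m)`-module: the Krull dimension of its lattice of
submodules, i.e. the longest length of a chain of submodules. -/
def lenOf (M : Type*) [AddCommGroup M] [Module (grG k g) M] : WithBot ℕ∞ :=
  Order.krullDim (Submodule (grG k g) M)

/-- The socle `(0 :_{G/ξG} 𝓜) = ((ξ) :_G 𝓜)/(ξ)` of `G(m)/ξ·G(m)`, where
`ξ = t^{g_1}*` is the canonical degree-one homogeneous parameter of `G(m)`. -/
abbrev socQ : Type _ :=
  ↥(Submodule.colon (Ideal.span {tstar k g (g 0)}) (MM k g)) ⧸
    (Submodule.comap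
      (Submodule.colon (Ideal.span {tstar k g (g 0)}) (MM k g)).subtype
      (Ideal.span {tstar k g (g 0)}))

/-- `G(m)` is Gorenstein: Cohen-Macaulay of type 1, i.e. Cohen-Macaulay and
the socle of `G(m)` modulo the homogeneous parameter `ξ = t^{g_1}*` has
length 1 as a `G(m)`-module. -/
def IsGor : Prop := IsCM k g ∧ lenOf k g (socQ k g) = 1


/-! ### Auxiliary lemmas -/

section Aux

variable {n' : ℕ} (g' : Fin (n' + 1) → ℕ)

lemma g_mem_S (j : Fin (n' + 1)) : g' j ∈ S g' :=
  AddSubmonoid.subset_closure ⟨j, rfl⟩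

lemma S_add_setM : ∀ h, ∀ x ∈ S g', ∀ y ∈ setM g' h, x + y ∈ setM g' h := by
  intro h
  induction h with
  | zero => exact fun x hx y hy => add_mem hx hy
  | succ h ih =>
    rintro x hx y ⟨m, hm, v, hv, hmv⟩
    have hmv' : m + v = y := hmv
    exact ⟨m, hm, x + v, ih x hx v hv, show m + (x + v) = x + y by omega⟩

lemma setM_add : ∀ a b, ∀ x ∈ setM g' a, ∀ y ∈ setM g' b, x + y ∈ setM g' (a + b) := by
  intro a
  induction a with
  | zero => intro b x hx y hy; rw [Nat.zero_add]; exact S_add_setM g' b x hx y hy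
  | succ a ih =>
    rintro b x ⟨m, hm, v, hv, hmv⟩ y hy
    have hmv' : m + v = x := hmv
    rw [Nat.succ_add]
    exact ⟨m, hm, v + y, ih b v hv y hy, show m + (v + y) = x + y by omega⟩

lemma setM_succ_le : ∀ h, setM g' (h + 1) ⊆ setM g' h := by
  intro h
  induction h with
  | zero =>
    rintro s ⟨u, hu, v, hv, huv⟩
    have : u + v = s := huv
    exact this ▸ add_mem hu.1 hv
  | succ h ih =>
    rintro s ⟨u, hu, v, hv, huv⟩
    exact ⟨u, hu, v, ih hv, huv⟩

lemma setM_le {a b : ℕ} (hab : a ≤ b) : setM g' b ⊆ setM g' a := by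
  induction hab with
  | refl => exact fun s hs => hs
  | step _ ih => exact fun s hs => ih (setM_succ_le g' _ hs)

lemma mem_setM_one {s : ℕ} (hs : s ∈ S g') (hs0 : s ≠ 0) : s ∈ setM g' 1 :=
  ⟨s, ⟨hs, hs0⟩, 0, (S g').zero_mem, add_zero s⟩

lemma nsmul_mem_setM {m : ℕ} (hm : m ∈ S g') (hm0 : m ≠ 0) : ∀ c, c * m ∈ setM g' c := by
  intro c
  induction c with
  | zero => simpa [setM] using (S g').zero_mem
  | succ c ih => exact ⟨m, ⟨hm, hm0⟩, c * m, ih, by ring⟩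

lemma sum_mem_setM {ι : Type*} [DecidableEq ι] (T : Finset ι) (c : ι → ℕ) (f : ι → ℕ)
    (hf : ∀ j ∈ T, f j ∈ S g' ∧ f j ≠ 0) :
    (∑ j ∈ T, c j * f j) ∈ setM g' (∑ j ∈ T, c j) := by
  induction T using Finset.induction_on with
  | empty => simpa [setM] using (S g').zero_mem
  | @insert a T ha ih =>
    rw [Finset.sum_insert ha, Finset.sum_insert ha]
    exact setM_add g' _ _ _
      (nsmul_mem_setM g' (hf a (Finset.mem_insert_self a T)).1
        (hf a (Finset.mem_insert_self a T)).2 (c a)) _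
      (ih fun j hj => hf j (Finset.mem_insert_of_mem hj))

lemma exists_decomp {u : ℕ} (hu : u ∈ S g') :
    ∃ c : Fin (n' + 1) → ℕ, u = ∑ j, c j * g' j := by
  induction hu using AddSubmonoid.closure_induction with
  | mem x hx =>
    obtain ⟨j, rfl⟩ := hx
    refine ⟨fun l => if l = j then 1 else 0, ?_⟩
    simp [ite_mul]
  | zero => exact ⟨0, by simp⟩
  | add x y hx hy px py =>
    obtain ⟨c, rfl⟩ := px
    obtain ⟨d, rfl⟩ := py
    exact ⟨c + d, by simp [add_mul, Finset.sum_add_distrib]⟩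

lemma exists_decomp_count : ∀ h, ∀ u ∈ setM g' h,
    ∃ c : Fin (n' + 1) → ℕ, u = ∑ j, c j * g' j ∧ h ≤ ∑ j, c j := by
  intro h
  induction h with
  | zero =>
    intro u hu
    obtain ⟨c, hc⟩ := exists_decomp g' hu
    exact ⟨c, hc, Nat.zero_le _⟩
  | succ h ih =>
    rintro u ⟨m, hm, v, hv, hmv⟩
    obtain ⟨c, hc⟩ := exists_decomp g' hm.1
    obtain ⟨d, hd, hcnt⟩ := ih v hv
    have hc1 : 1 ≤ ∑ j, c j := by
      by_contra hcon
      have hzero : ∑ j, c j = 0 := by omega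
      have : ∀ j ∈ Finset.univ, c j = 0 := Finset.sum_eq_zero_iff.mp hzero
      have : m = 0 := by
        rw [hc]
        exact Finset.sum_eq_zero fun j hj => by rw [this j hj, Nat.zero_mul]
      exact hm.2 this
    refine ⟨c + d, ?_, ?_⟩
    · rw [← hmv, hc, hd]
      simp [add_mul, Finset.sum_add_distrib]
    · simp only [Pi.add_apply, Finset.sum_add_distrib]
      omega

lemma g0_le_g (j : Fin (n' + 1)) (hg : MinGen g') : g' 0 ≤ g' j :=
  hg.smono.monotone (Fin.zero_le j)

lemma g0_le_mem {u : ℕ} (hg : MinGen g') (h0 : 0 < g' 0) (hu : u ∈ S g') (hu0 : u ≠ 0) :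
    g' 0 ≤ u := by
  obtain ⟨c, hc⟩ := exists_decomp g' hu
  have hc1 : 1 ≤ ∑ j, c j := by
    by_contra hcon
    have hzero : ∑ j, c j = 0 := by omega
    have hz : ∀ j ∈ Finset.univ, c j = 0 := Finset.sum_eq_zero_iff.mp hzero
    exact hu0 (by
      rw [hc]
      exact Finset.sum_eq_zero fun j hj => by rw [hz j hj, Nat.zero_mul])
  calc g' 0 ≤ (∑ j, c j) * g' 0 := Nat.le_mul_of_pos_left _ hc1
    _ = ∑ j, c j * g' 0 := by rw [Finset.sum_mul]
    _ ≤ ∑ j, c j * g' j := Finset.sum_le_sum fun j _ =>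
        Nat.mul_le_mul_left _ (g0_le_g g' j hg)
    _ = u := hc.symm

/-- Pigeonhole: for `j₀ = (n+1)·g 0`, any element of `setM (j₀+1)` can give up a copy
of `g 0`. -/
lemma ph_sub (hg : MinGen g') (h0 : 0 < g' 0) {u : ℕ}
    (hu : u ∈ setM g' ((n' + 1) * g' 0 + 1)) :
    g' 0 ≤ u ∧ u - g' 0 ∈ setM g' ((n' + 1) * g' 0) := by
  classical
  set j0 := (n' + 1) * g' 0 with hj0
  obtain ⟨c, hc, hcnt⟩ := exists_decomp_count g' (j0 + 1) u hu
  set C := ∑ j, c j with hC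
  have hgS : ∀ j : Fin (n' + 1), g' j ∈ S g' ∧ g' j ≠ 0 := fun j =>
    ⟨g_mem_S g' j, by have := g0_le_g g' j hg; omega⟩
  by_cases hc0 : 1 ≤ c 0
  · -- use a copy of g' 0 directly
    have hsplit : ∑ j ∈ Finset.univ.erase 0, c j * g' j + c 0 * g' 0 = u := by
      rw [hc]; exact Finset.sum_erase_add _ _ (Finset.mem_univ 0)
    have hcsplit : ∑ j ∈ Finset.univ.erase 0, c j + c 0 = C := by
      rw [hC]; exact Finset.sum_erase_add _ _ (Finset.mem_univ 0)
    have hul : g' 0 ≤ u := by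
      have : g' 0 ≤ c 0 * g' 0 := Nat.le_mul_of_pos_left _ hc0
      omega
    refine ⟨hul, ?_⟩
    have hmem : ∑ j ∈ Finset.univ.erase 0, c j * g' j + (c 0 - 1) * g' 0 ∈
        setM g' (∑ j ∈ Finset.univ.erase 0, c j + (c 0 - 1)) :=
      setM_add g' _ _ _ (sum_mem_setM g' _ _ _ fun j _ => hgS j) _
        (nsmul_mem_setM g' (g_mem_S g' 0) (by omega) _)
    have heq : u - g' 0 = ∑ j ∈ Finset.univ.erase 0, c j * g' j + (c 0 - 1) * g' 0 := by
      have h1 : c 0 * g' 0 = (c 0 - 1) * g' 0 + g' 0 := by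
        zify [hc0]; ring
      omega
    rw [heq]
    exact setM_le g' (by omega) hmem
  · -- c 0 = 0 : some c j ≥ g' 0 with j ≠ 0
    have hc00 : c 0 = 0 := by omega
    have hCerase : ∑ j ∈ Finset.univ.erase 0, c j = C := by
      have := Finset.sum_erase_add Finset.univ c (Finset.mem_univ (0 : Fin (n' + 1)))
      omega
    have hcard : (Finset.univ.erase (0 : Fin (n' + 1))).card = n' := by
      rw [Finset.card_erase_of_mem (Finset.mem_univ _), Finset.card_univ, Fintype.card_fin]
      omega
    have hex : ∃ j ∈ Finset.univ.erase (0 : Fin (n' + 1)), g' 0 ≤ c j := by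
      by_contra hcon
      push_neg at hcon
      have hbound : C ≤ n' * (g' 0 - 1) := by
        calc C = ∑ j ∈ Finset.univ.erase 0, c j := hCerase.symm
          _ ≤ ∑ _j ∈ Finset.univ.erase (0 : Fin (n' + 1)), (g' 0 - 1) :=
              Finset.sum_le_sum fun j hj => by have := hcon j hj; omega
          _ = n' * (g' 0 - 1) := by rw [Finset.sum_const, hcard, smul_eq_mul]
      have h1 : n' * (g' 0 - 1) ≤ n' * g' 0 := Nat.mul_le_mul_left _ (by omega)
      have h2 : n' * g' 0 ≤ (n' + 1) * g' 0 := Nat.mul_le_mul_right _ (by omega)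
      omega
    obtain ⟨js, hjs, hcjs⟩ := hex
    set A := g' js with hA
    set CA := c js with hCA
    have hAg : g' 0 ≤ A := g0_le_g g' js hg
    have hsplit : ∑ j ∈ Finset.univ.erase js, c j * g' j + CA * A = u := by
      rw [hc]; exact Finset.sum_erase_add _ _ (Finset.mem_univ js)
    have hcsplit : ∑ j ∈ Finset.univ.erase js, c j + CA = C := by
      rw [hC]; exact Finset.sum_erase_add _ _ (Finset.mem_univ js)
    have hu0 : g' 0 ≤ u := by
      have h1 : g' 0 * 1 ≤ CA * A := Nat.mul_le_mul hcjs (by omega)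
      omega
    refine ⟨hu0, ?_⟩
    have heq : CA * A = ((A - 1) * g' 0 + (CA - g' 0) * A) + g' 0 := by
      zify [hAg, hcjs, show (1:ℕ) ≤ A by omega]
      ring
    have hmem : ((A - 1) * g' 0 + (CA - g' 0) * A) + ∑ j ∈ Finset.univ.erase js, c j * g' j ∈
        setM g' (((A - 1) + (CA - g' 0)) + ∑ j ∈ Finset.univ.erase js, c j) :=
      setM_add g' _ _ _
        (setM_add g' _ _ _ (nsmul_mem_setM g' (g_mem_S g' 0) (by omega) _)
          _ (nsmul_mem_setM g' (g_mem_S g' js) (by omega) _)) _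
        (sum_mem_setM g' _ _ _ fun j _ => hgS j)
    have heq2 : u - g' 0 =
        ((A - 1) * g' 0 + (CA - g' 0) * A) + ∑ j ∈ Finset.univ.erase js, c j * g' j := by
      omega
    rw [heq2]
    refine setM_le g' ?_ hmem
    omega

lemma ord_bdd (s : ℕ) : BddAbove {h | s ∈ setM g' h} :=
  ⟨s, fun h hh => le_of_mem_setM g' h s hh⟩

lemma le_ordS {s h : ℕ} (hs : s ∈ setM g' h) : h ≤ ordS g' s :=
  le_csSup (ord_bdd g' s) hs

lemma S_le_S' (hg : MinGen g') : S g' ≤ S' g' := by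
  have hsub : Set.range g' ⊆ ↑(S' g') := by
    rintro x ⟨j, rfl⟩
    have h1 : g' j - g' 0 ∈ S' g' :=
      AddSubmonoid.subset_closure (Set.mem_insert_iff.mpr (Or.inr ⟨j, rfl⟩))
    have h2 : g' 0 ∈ S' g' := AddSubmonoid.subset_closure (Set.mem_insert _ _)
    have h3 : g' j - g' 0 + g' 0 = g' j := by have := g0_le_g g' j hg; omega
    exact h3 ▸ add_mem h1 h2
  exact AddSubmonoid.closure_le.mpr hsub

lemma sub_g0_mem_S' (hg : MinGen g') {m : ℕ} (hm : m ∈ S g') (hm0 : m ≠ 0) :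
    g' 0 ≤ m ∧ m - g' 0 ∈ S' g' := by
  obtain ⟨c, hc⟩ := exists_decomp g' hm
  set C := ∑ j, c j with hCdef
  have hC1 : 1 ≤ C := by
    by_contra hcon
    have hzero : C = 0 := by omega
    have hz : ∀ j ∈ Finset.univ, c j = 0 := Finset.sum_eq_zero_iff.mp hzero
    exact hm0 (by
      rw [hc]
      exact Finset.sum_eq_zero fun j hj => by rw [hz j hj, Nat.zero_mul])
  have hterm : ∀ j : Fin (n' + 1), c j * g' j = c j * (g' j - g' 0) + c j * g' 0 := by
    intro j
    have := g0_le_g g' j hg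
    zify [this]; ring
  have hsum : m = ∑ j, c j * (g' j - g' 0) + C * g' 0 := by
    rw [hc, Finset.sum_congr rfl (fun j _ => hterm j), Finset.sum_add_distrib, ← Finset.sum_mul]
  have hmemY : ∑ j, c j * (g' j - g' 0) + (C - 1) * g' 0 ∈ S' g' := by
    apply add_mem
    · apply sum_mem
      intro j _
      simpa [S'] using AddSubmonoid.nsmul_mem _
        (AddSubmonoid.subset_closure (Set.mem_insert_iff.mpr
          (Or.inr ⟨j, rfl⟩)) : g' j - g' 0 ∈ S' g') (c j)
    · simpa [S'] using AddSubmonoid.nsmul_mem _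
        (AddSubmonoid.subset_closure (Set.mem_insert _ _) : g' 0 ∈ S' g') (C - 1)
  have hCg : C * g' 0 = (C - 1) * g' 0 + g' 0 := by zify [hC1]; ring
  constructor
  · omega
  · have heq : m - g' 0 = ∑ j, c j * (g' j - g' 0) + (C - 1) * g' 0 := by omega
    rw [heq]; exact hmemY

lemma setM_blowup (hg : MinGen g') : ∀ h, ∀ u ∈ setM g' h, ∃ y ∈ S' g', u = y + h * g' 0 := by
  intro h
  induction h with
  | zero => intro u hu; exact ⟨u, S_le_S' g' hg hu, by simp⟩
  | succ h ih =>
    rintro u ⟨m, hm, v, hv, hmv⟩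
    have hmv' : m + v = u := hmv
    obtain ⟨y', hy', hveq⟩ := ih v hv
    obtain ⟨hge, hmem⟩ := sub_g0_mem_S' g' hg hm.1 hm.2
    refine ⟨(m - g' 0) + y', add_mem hmem hy', ?_⟩
    have hmul : (h + 1) * g' 0 = h * g' 0 + g' 0 := by ring
    omega

lemma eventual (hg : MinGen g') (h0 : 0 < g' 0) {x : ℕ} (hx : x ∈ S' g') :
    ∃ L0, ∀ L, L0 ≤ L → x + L * g' 0 ∈ setM g' L := by
  induction hx using AddSubmonoid.closure_induction with
  | mem z hz =>
    rcases Set.mem_insert_iff.mp hz with rfl | ⟨j, rfl⟩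
    · refine ⟨0, fun L _ => ?_⟩
      have heq : g' 0 + L * g' 0 = (L + 1) * g' 0 := by ring
      rw [heq]
      exact setM_succ_le g' L (nsmul_mem_setM g' (g_mem_S g' 0) (by omega) (L + 1))
    · refine ⟨1, fun L hL => ?_⟩
      have hj := g0_le_g g' j hg
      have heq : g' j - g' 0 + L * g' 0 = g' j + (L - 1) * g' 0 := by
        have h1 : L * g' 0 = (L - 1) * g' 0 + g' 0 := by zify [hL]; ring
        omega
      rw [heq]
      have hres := setM_add g' 1 (L - 1) (g' j)
        (mem_setM_one g' (g_mem_S g' j) (by omega)) _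
        (nsmul_mem_setM g' (g_mem_S g' 0) (by omega) (L - 1))
      rwa [show 1 + (L - 1) = L by omega] at hres
  | zero =>
    refine ⟨0, fun L _ => ?_⟩
    rw [zero_add]
    exact nsmul_mem_setM g' (g_mem_S g' 0) (by omega) L
  | add a b ha hb pa pb =>
    obtain ⟨La, hLa⟩ := pa
    obtain ⟨Lb, hLb⟩ := pb
    refine ⟨La + Lb, fun L hL => ?_⟩
    have h1 : a + b + L * g' 0 = (a + La * g' 0) + (b + (L - La) * g' 0) := by
      have h2 : L * g' 0 = La * g' 0 + (L - La) * g' 0 := by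
        zify [show La ≤ L by omega]; ring
      omega
    rw [h1]
    have hres := setM_add g' La (L - La) _ (hLa La le_rfl) _ (hLb (L - La) (by omega))
    rwa [show La + (L - La) = L by omega] at hres

lemma residue_exists (hg : MinGen g') {i : ℕ} (hi : i < g' 0) :
    ∃ s ∈ S g', s % g' 0 = i := by
  have h0 : 0 < g' 0 := by omega
  haveI : NeZero (g' 0) := ⟨by omega⟩
  set T : AddSubmonoid (ZMod (g' 0)) :=
    AddSubmonoid.map (Nat.castAddMonoidHom (ZMod (g' 0))) (S g') with hT
  have hmemT : ∀ s ∈ S g', ((s : ℕ) : ZMod (g' 0)) ∈ T := fun s hs => ⟨s, hs, rfl⟩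
  have hTneg : ∀ x ∈ T, -x ∈ T := by
    rintro x ⟨s, hs, rfl⟩
    refine ⟨(g' 0 - 1) * s, ?_, ?_⟩
    · simpa using AddSubmonoid.nsmul_mem _ hs (g' 0 - 1)
    · show (((g' 0 - 1) * s : ℕ) : ZMod (g' 0)) = -((s : ℕ) : ZMod (g' 0))
      push_cast [Nat.cast_sub (show 1 ≤ g' 0 by omega)]
      rw [ZMod.natCast_self]
      ring
  have hzsm : ∀ x ∈ T, ∀ z : ℤ, z • x ∈ T := by
    intro x hx z
    induction z using Int.induction_on with
    | zero => simpa using T.zero_mem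
    | succ m ih =>
      rw [add_smul, one_smul]
      exact T.add_mem ih hx
    | pred m ih =>
      rw [sub_smul, one_smul, sub_eq_add_neg]
      exact T.add_mem ih (hTneg x hx)
  have hgcdT : ∀ F : Finset (Fin (n' + 1)), ((F.gcd g' : ℕ) : ZMod (g' 0)) ∈ T := by
    intro F
    induction F using Finset.induction_on with
    | empty => simpa using T.zero_mem
    | @insert a F ha ih =>
      rw [Finset.gcd_insert]
      have hga : ((g' a : ℕ) : ZMod (g' 0)) ∈ T := hmemT _ (g_mem_S g' a)
      have hkey := Nat.gcd_eq_gcd_ab (g' a) (F.gcd g')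
      have hcast : ((gcd (g' a) (F.gcd g') : ℕ) : ZMod (g' 0)) =
          (Nat.gcdA (g' a) (F.gcd g')) • ((g' a : ℕ) : ZMod (g' 0)) +
          (Nat.gcdB (g' a) (F.gcd g')) • ((F.gcd g' : ℕ) : ZMod (g' 0)) := by
        have hgg : gcd (g' a) (F.gcd g') = Nat.gcd (g' a) (F.gcd g') := rfl
        rw [hgg]
        have h2 : ((Nat.gcd (g' a) (F.gcd g') : ℤ) : ZMod (g' 0)) =
            ((((g' a : ℕ) : ℤ) * Nat.gcdA (g' a) (F.gcd g') +
              ((F.gcd g' : ℕ) : ℤ) * Nat.gcdB (g' a) (F.gcd g') : ℤ) : ZMod (g' 0)) := by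
          rw [← hkey]
        push_cast at h2
        rw [h2, zsmul_eq_mul, zsmul_eq_mul]
        push_cast
        ring
      rw [hcast]
      exact T.add_mem (hzsm _ hga _) (hzsm _ ih _)
  have hone : ((1 : ℕ) : ZMod (g' 0)) ∈ T := by
    have := hgcdT Finset.univ
    rwa [hg.gcdeq] at this
  have hiT : ((i : ℕ) : ZMod (g' 0)) ∈ T := by
    have := AddSubmonoid.nsmul_mem T hone i
    simpa [nsmul_eq_mul] using this
  obtain ⟨s, hs, hcast⟩ := hiT
  refine ⟨s, hs, ?_⟩
  have hcast' : ((s : ℕ) : ZMod (g' 0)) = ((i : ℕ) : ZMod (g' 0)) := hcast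
  have := congrArg ZMod.val hcast'
  rwa [ZMod.val_natCast, ZMod.val_natCast, Nat.mod_eq_of_lt hi] at this

lemma ap_spec (hg : MinGen g') {i : ℕ} (hi : i < g' 0) :
    ap g' i ∈ S g' ∧ ap g' i % g' 0 = i := by
  obtain ⟨s, hs, hmod⟩ := residue_exists g' hg hi
  exact Nat.sInf_mem (⟨s, hs, hmod⟩ : Set.Nonempty {s | s ∈ S g' ∧ s % g' 0 = i})

lemma ap'_spec (hg : MinGen g') {i : ℕ} (hi : i < g' 0) :
    ap' g' i ∈ S' g' ∧ ap' g' i % g' 0 = i := by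
  obtain ⟨s, hs, hmod⟩ := residue_exists g' hg hi
  exact Nat.sInf_mem (⟨s, S_le_S' g' hg hs, hmod⟩ :
    Set.Nonempty {s | s ∈ S' g' ∧ s % g' 0 = i})

lemma ap_eq (hg : MinGen g') {i : ℕ} (hi : i < g' 0) :
    ap g' i = ap' g' i + aa g' i * g' 0 := by
  have h0 : 0 < g' 0 := by omega
  have hA := ap_spec g' hg hi
  have hA' := ap'_spec g' hg hi
  have hle : ap' g' i ≤ ap g' i := Nat.sInf_le ⟨S_le_S' g' hg hA.1, hA.2⟩
  have h1 := Nat.div_add_mod (ap g' i) (g' 0)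
  have h2 := Nat.div_add_mod (ap' g' i) (g' 0)
  rw [hA.2] at h1
  rw [hA'.2] at h2
  have hdvd : g' 0 ∣ ap g' i - ap' g' i := by
    refine ⟨ap g' i / g' 0 - ap' g' i / g' 0, ?_⟩
    rw [Nat.mul_sub]
    omega
  have hq := Nat.div_mul_cancel hdvd
  have : aa g' i * g' 0 = ap g' i - ap' g' i := hq
  omega

end Aux

section RingAux

variable (k : Type*) [Field k] {n' : ℕ} (g' : Fin (n' + 1) → ℕ)

lemma tR_zero : tR k g' 0 = 1 := by
  rw [tR, dif_pos (S g').zero_mem]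
  apply Subtype.ext
  show (PowerSeries.monomial (R := k) 0) 1 = ((1 : Rsub k g') : PowerSeries k)
  simp

lemma tR_coe {v : ℕ} (hv : v ∈ S g') :
    (tR k g' v : PowerSeries k) = PowerSeries.monomial (R := k) v 1 := by
  rw [tR, dif_pos hv]

lemma mI_pow_eq_span (hg : MinGen g') (h0 : 0 < g' 0) (e : ℕ) :
    mI k g' ^ e = Ideal.span (tR k g' '' setM g' e) := by
  refine le_antisymm ?_ ?_
  · induction e with
    | zero =>
      rw [pow_zero, Ideal.one_eq_top, top_le_iff, Ideal.eq_top_iff_one]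
      exact Ideal.subset_span ⟨0, (S g').zero_mem, tR_zero k g'⟩
    | succ e ih =>
      rw [pow_succ]
      calc mI k g' ^ e * mI k g'
          ≤ Ideal.span (tR k g' '' setM g' e) * mI k g' := Ideal.mul_mono_left ih
        _ = Ideal.span (tR k g' '' setM g' e) *
            Ideal.span (Set.range fun l => tR k g' (g' l)) := rfl
        _ ≤ Ideal.span (tR k g' '' setM g' (e + 1)) := by
            rw [Ideal.span_mul_span, Ideal.span_le]
            intro x hx
            rw [Set.mem_mul] at hx
            obtain ⟨s, hs, t, ht, rfl⟩ := hx
            obtain ⟨v, hv, rfl⟩ := hs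
            obtain ⟨l, rfl⟩ := ht
            have hvS : v ∈ S g' := setM_subset g' e hv
            have hglS : g' l ∈ S g' := g_mem_S g' l
            rw [show tR k g' v * tR k g' (g' l) = tR k g' (v + g' l) from
              (tR_mul k g' hvS hglS).symm]
            have hmem : v + g' l ∈ setM g' (e + 1) :=
              setM_add g' e 1 v hv (g' l)
                (mem_setM_one g' hglS (by have := g0_le_g g' l hg; omega))
            exact Ideal.subset_span ⟨v + g' l, hmem, rfl⟩
  · rw [Ideal.span_le]
    rintro x ⟨v, hv, rfl⟩
    exact SetLike.mem_coe.mpr (tR_mem_pow_of_setM k g' e v hv)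

/-- The ideal of elements of `R` supported in `setM g h`. -/
def NN (h : ℕ) : Ideal (Rsub k g') where
  carrier := {f | ∀ c, PowerSeries.coeff (R := k) c (f : PowerSeries k) ≠ 0 → c ∈ setM g' h}
  zero_mem' := by intro c hc; simp at hc
  add_mem' := by
    intro a b ha hb c hc
    rw [show ((a + b : Rsub k g') : PowerSeries k) = (a : PowerSeries k) + (b : PowerSeries k)
      from rfl, map_add] at hc
    by_cases h1 : PowerSeries.coeff (R := k) c (a : PowerSeries k) ≠ 0
    · exact ha c h1
    · push_neg at h1
      rw [h1, zero_add] at hc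
      exact hb c hc
  smul_mem' := by
    intro r f hf c hc
    rw [smul_eq_mul, show ((r * f : Rsub k g') : PowerSeries k) =
      (r : PowerSeries k) * (f : PowerSeries k) from rfl, PowerSeries.coeff_mul] at hc
    obtain ⟨p, hp, hne⟩ := Finset.exists_ne_zero_of_sum_ne_zero hc
    have h1 : p.1 ∈ S g' := r.2 p.1 (left_ne_zero_of_mul hne)
    have h2 : p.2 ∈ setM g' h := hf p.2 (right_ne_zero_of_mul hne)
    exact (Finset.HasAntidiagonal.mem_antidiagonal.mp hp) ▸ S_add_setM g' h p.1 h1 p.2 h2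

lemma NN_mul {a b : ℕ} {x y : Rsub k g'} (hx : x ∈ NN k g' a) (hy : y ∈ NN k g' b) :
    x * y ∈ NN k g' (a + b) := by
  intro c hc
  rw [show ((x * y : Rsub k g') : PowerSeries k) =
    (x : PowerSeries k) * (y : PowerSeries k) from rfl, PowerSeries.coeff_mul] at hc
  obtain ⟨p, hp, hne⟩ := Finset.exists_ne_zero_of_sum_ne_zero hc
  have h1 := hx p.1 (left_ne_zero_of_mul hne)
  have h2 := hy p.2 (right_ne_zero_of_mul hne)
  exact (Finset.HasAntidiagonal.mem_antidiagonal.mp hp) ▸ setM_add g' a b p.1 h1 p.2 h2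

lemma mI_pow_le_NN (hg : MinGen g') (h0 : 0 < g' 0) (e : ℕ) :
    mI k g' ^ e ≤ NN k g' e := by
  rw [mI_pow_eq_span k g' hg h0 e, Ideal.span_le]
  rintro x ⟨v, hv, rfl⟩
  have hvS : v ∈ S g' := setM_subset g' e hv
  intro c hc
  rw [tR_coe k g' hvS, PowerSeries.coeff_monomial] at hc
  by_cases hcv : c = v
  · exact hcv ▸ hv
  · rw [if_neg hcv] at hc; exact absurd rfl hc

lemma rnum_set_mem (hg : MinGen g') (h0 : 0 < g' 0) :
    mI k g' ^ ((n' + 1) * g' 0 + 1) =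
      Ideal.span {tR k g' (g' 0)} * mI k g' ^ ((n' + 1) * g' 0) := by
  set j0 := (n' + 1) * g' 0 with hj0
  refine le_antisymm ?_ ?_
  · rw [mI_pow_eq_span k g' hg h0 (j0 + 1), Ideal.span_le]
    rintro x ⟨v, hv, rfl⟩
    obtain ⟨hle, hsub⟩ := ph_sub g' hg h0 hv
    have heq : tR k g' v = tR k g' (g' 0) * tR k g' (v - g' 0) := by
      rw [← tR_mul k g' (g_mem_S g' 0) (setM_subset g' _ hsub)]
      congr 1
      omega
    rw [heq]
    exact SetLike.mem_coe.mpr (Ideal.mul_mem_mul (Ideal.subset_span rfl)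
      (tR_mem_pow_of_setM k g' _ _ hsub))
  · have h1 : Ideal.span {tR k g' (g' 0)} ≤ mI k g' := by
      rw [Ideal.span_le, Set.singleton_subset_iff]
      exact SetLike.mem_coe.mpr (tR_mem_mI k g' (g_mem_S g' 0) (by omega))
    calc Ideal.span {tR k g' (g' 0)} * mI k g' ^ j0
        ≤ mI k g' * mI k g' ^ j0 := Ideal.mul_mono_left h1
      _ = mI k g' ^ (j0 + 1) := (pow_succ' _ _).symm

lemma rnum_spec (hg : MinGen g') (h0 : 0 < g' 0) :
    mI k g' ^ (rnum k g' + 1) = Ideal.span {tR k g' (g' 0)} * mI k g' ^ rnum k g' := by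
  have h1 := Nat.sInf_mem (⟨(n' + 1) * g' 0, rnum_set_mem k g' hg h0⟩ :
    Set.Nonempty {j | mI k g' ^ (j + 1) = Ideal.span {tR k g' (g' 0)} * mI k g' ^ j})
  exact h1

lemma red_ideal (hg : MinGen g') (h0 : 0 < g' 0) : ∀ m : ℕ,
    mI k g' ^ (rnum k g' + m + 1) = Ideal.span {tR k g' (g' 0)} * mI k g' ^ (rnum k g' + m) := by
  intro m
  induction m with
  | zero => simpa using rnum_spec k g' hg h0
  | succ m ih =>
    have : mI k g' ^ (rnum k g' + m + 1 + 1) = mI k g' ^ (rnum k g' + m + 1) * mI k g' :=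
      pow_succ _ _
    rw [show rnum k g' + (m + 1) + 1 = rnum k g' + m + 1 + 1 by omega, this, ih, mul_assoc,
      ← pow_succ, show rnum k g' + (m + 1) = rnum k g' + m + 1 by omega]

lemma red_step (hg : MinGen g') (h0 : 0 < g' 0) {K w : ℕ} (hK : rnum k g' ≤ K)
    (hw : w ∈ setM g' (K + 1)) : g' 0 ≤ w ∧ w - g' 0 ∈ setM g' K := by
  have hid : mI k g' ^ (K + 1) = Ideal.span {tR k g' (g' 0)} * mI k g' ^ K := by
    have h1 := red_ideal k g' hg h0 (K - rnum k g')
    rwa [show rnum k g' + (K - rnum k g') = K by omega] at h1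
  have hwS : w ∈ S g' := setM_subset g' _ hw
  have h1 : tR k g' w ∈ Ideal.span {tR k g' (g' 0)} * mI k g' ^ K := by
    rw [← hid]; exact tR_mem_pow_of_setM k g' _ _ hw
  obtain ⟨z, hz, hmul⟩ := Ideal.mem_span_singleton_mul.mp h1
  have hzN := mI_pow_le_NN k g' hg h0 K hz
  have hval : (tR k g' (g' 0) : PowerSeries k) * (z : PowerSeries k) =
      (tR k g' w : PowerSeries k) := by
    rw [← MulMemClass.coe_mul, hmul]
  have hg0val : (tR k g' (g' 0) : PowerSeries k) = PowerSeries.X ^ (g' 0) := by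
    rw [tR_coe k g' (g_mem_S g' 0), ← PowerSeries.X_pow_eq]
  rw [hg0val, tR_coe k g' hwS] at hval
  have hle : g' 0 ≤ w := by
    by_contra hcon
    push_neg at hcon
    have hc := congrArg (PowerSeries.coeff (R := k) w) hval
    rw [PowerSeries.coeff_monomial, if_pos rfl, PowerSeries.coeff_mul] at hc
    rw [Finset.sum_eq_zero (fun p hp => ?_)] at hc
    · exact zero_ne_one hc
    · have hpc := Finset.HasAntidiagonal.mem_antidiagonal.mp hp
      rw [PowerSeries.coeff_X_pow, if_neg (by omega), zero_mul]
  refine ⟨hle, ?_⟩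
  have h2 : PowerSeries.coeff (R := k) (w - g' 0) (z : PowerSeries k) = 1 := by
    have h3 := PowerSeries.coeff_X_pow_mul (z : PowerSeries k) (g' 0) (w - g' 0)
    rw [show w - g' 0 + g' 0 = w by omega, hval, PowerSeries.coeff_monomial, if_pos rfl] at h3
    exact h3.symm
  exact hzN _ (by rw [h2]; exact one_ne_zero)

lemma crux_base (hg : MinGen g') (h0 : 0 < g' 0) {i : ℕ} (hi : i < g' 0)
    (hab : bb g' i < aa g' i) {u : ℕ} (hu : u ∈ setM g' (rnum k g')) :
    ap g' i + u ∈ setM g' (bb g' i + rnum k g' + 1) := by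
  by_contra hcon
  set r := rnum k g' with hr
  set b := bb g' i with hb
  set v := ap g' i + u with hv
  have hup : ∀ N, v + N * g' 0 ∉ setM g' (b + r + 1 + N) := by
    intro N
    induction N with
    | zero => simpa using hcon
    | succ N ih =>
      intro hmem
      rw [show b + r + 1 + (N + 1) = (b + r + 1 + N) + 1 by omega] at hmem
      obtain ⟨hge, hsub⟩ := red_step k g' hg h0 (show r ≤ b + r + 1 + N by omega) hmem
      rw [show v + (N + 1) * g' 0 - g' 0 = v + N * g' 0 by
        have : (N + 1) * g' 0 = N * g' 0 + g' 0 := by ring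
        omega] at hsub
      exact ih hsub
  obtain ⟨y, hyS, hyeq⟩ := setM_blowup g' hg r u hu
  have hap' := ap'_spec g' hg hi
  have hapeq := ap_eq g' hg hi
  set x := ap' g' i + y with hx
  have hxS : x ∈ S' g' := add_mem hap'.1 hyS
  obtain ⟨L0, hL0⟩ := eventual g' hg h0 hxS
  have hL : x + (aa g' i + r + L0) * g' 0 ∈ setM g' (aa g' i + r + L0) := hL0 _ (by omega)
  have heq : v + L0 * g' 0 = x + (aa g' i + r + L0) * g' 0 := by
    rw [hv, hapeq, hyeq, hx]; ring
  have hmem : v + L0 * g' 0 ∈ setM g' (b + r + 1 + L0) := by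
    rw [heq]
    exact setM_le g' (by omega) hL
  exact hup L0 hmem

lemma cruxX (hg : MinGen g') (h0 : 0 < g' 0) {i : ℕ} (hi : i < g' 0)
    (hab : bb g' i < aa g' i) :
    ∀ e, rnum k g' ≤ e → ∀ u ∈ setM g' e, ap g' i + u ∈ setM g' (bb g' i + e + 1) := by
  intro e he
  induction e, he using Nat.le_induction with
  | base => exact fun u hu => crux_base k g' hg h0 hi hab hu
  | succ e he ih =>
    intro u hu
    obtain ⟨hge, hsub⟩ := red_step k g' hg h0 he hu
    have h1 := ih _ hsub
    have h2 := setM_add g' (bb g' i + e + 1) 1 _ h1 _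
      (mem_setM_one g' (g_mem_S g' 0) (by omega))
    rw [show ap g' i + u = ap g' i + (u - g' 0) + g' 0 by omega]
    rwa [show bb g' i + e + 1 + 1 = bb g' i + (e + 1) + 1 by omega] at h2

lemma key_mul (hg : MinGen g') (h0 : 0 < g' 0) {i : ℕ} (hi : i < g' 0)
    (hab : bb g' i < aa g' i) {e : ℕ} (he : rnum k g' ≤ e) {z : Rsub k g'}
    (hz : z ∈ mI k g' ^ e) :
    tR k g' (ap g' i) * z ∈ mI k g' ^ (bb g' i + e + 1) := by
  rw [mI_pow_eq_span k g' hg h0 e] at hz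
  refine Submodule.span_induction
    (p := fun x _ => tR k g' (ap g' i) * x ∈ mI k g' ^ (bb g' i + e + 1)) ?_ ?_ ?_ ?_ hz
  · rintro x ⟨v, hv, rfl⟩
    have hvS : v ∈ S g' := setM_subset g' e hv
    have hapS : ap g' i ∈ S g' := (ap_spec g' hg hi).1
    rw [← tR_mul k g' hapS hvS]
    exact tR_mem_pow_of_setM k g' _ _ (cruxX k g' hg h0 hi hab e he v hv)
  · show tR k g' (ap g' i) * 0 ∈ mI k g' ^ (bb g' i + e + 1)
    rw [mul_zero]; exact zero_mem _
  · intro x y _ _ px py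
    show tR k g' (ap g' i) * (x + y) ∈ mI k g' ^ (bb g' i + e + 1)
    rw [mul_add]; exact add_mem px py
  · intro a x _ px
    show tR k g' (ap g' i) * (a • x) ∈ mI k g' ^ (bb g' i + e + 1)
    rw [smul_eq_mul, ← mul_assoc, mul_comm (tR k g' (ap g' i)) a, mul_assoc]
    exact Ideal.mul_mem_left _ a px

/-- The degree filtration ideal of the Rees algebra. -/
def DD (e : ℕ) : Ideal (reesAlgebra (mI k g')) where
  carrier := {f | ∀ d, ((f : (Rsub k g')[X])).coeff d ∈ mI k g' ^ max d e}
  zero_mem' := by intro d; simp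
  add_mem' := by
    intro a b ha hb d
    rw [show ((a + b : reesAlgebra (mI k g')) : (Rsub k g')[X]) =
      (a : (Rsub k g')[X]) + (b : (Rsub k g')[X]) from rfl, Polynomial.coeff_add]
    exact add_mem (ha d) (hb d)
  smul_mem' := by
    intro cc x hx d
    rw [smul_eq_mul, show ((cc * x : reesAlgebra (mI k g')) : (Rsub k g')[X]) =
      (cc : (Rsub k g')[X]) * (x : (Rsub k g')[X]) from rfl, Polynomial.coeff_mul]
    refine Ideal.sum_mem _ fun p hp => ?_
    have hpc := Finset.HasAntidiagonal.mem_antidiagonal.mp hp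
    have h1 : (cc : (Rsub k g')[X]).coeff p.1 ∈ mI k g' ^ p.1 :=
      (mem_reesAlgebra_iff _ _).mp cc.2 p.1
    have h3 := Ideal.mul_mem_mul h1 (hx p.2)
    rw [← pow_add] at h3
    exact Ideal.pow_le_pow_right (by omega) h3

lemma C_le_D1 : Ideal.comap ((Polynomial.evalRingHom (0 : Rsub k g')).comp
    (reesAlgebra (mI k g')).val.toRingHom) (mI k g') ≤ DD k g' 1 := by
  intro f hf
  rw [Ideal.mem_comap] at hf
  intro d
  match d with
  | 0 =>
    have hval : ((Polynomial.evalRingHom (0 : Rsub k g')).comp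
        (reesAlgebra (mI k g')).val.toRingHom) f = ((f : (Rsub k g')[X])).coeff 0 := by
      simp [Polynomial.coeff_zero_eq_eval_zero]
    rw [hval] at hf
    simpa using hf
  | d + 1 =>
    have h1 := (mem_reesAlgebra_iff _ _).mp f.2 (d + 1)
    rwa [show max (d + 1) 1 = d + 1 by omega]

lemma DD_mul (a b : ℕ) : DD k g' a * DD k g' b ≤ DD k g' (a + b) := by
  rw [Ideal.mul_le]
  intro x hx y hy d
  rw [show ((x * y : reesAlgebra (mI k g')) : (Rsub k g')[X]) =
    (x : (Rsub k g')[X]) * (y : (Rsub k g')[X]) from rfl, Polynomial.coeff_mul]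
  refine Ideal.sum_mem _ fun p hp => ?_
  have hpc := Finset.HasAntidiagonal.mem_antidiagonal.mp hp
  have h3 := Ideal.mul_mem_mul (hx p.1) (hy p.2)
  rw [← pow_add] at h3
  exact Ideal.pow_le_pow_right (by omega) h3

lemma C_pow_le_D : ∀ e, (Ideal.comap ((Polynomial.evalRingHom (0 : Rsub k g')).comp
    (reesAlgebra (mI k g')).val.toRingHom) (mI k g')) ^ e ≤ DD k g' e := by
  intro e
  induction e with
  | zero =>
    rw [pow_zero, Ideal.one_eq_top]
    intro f _ d
    have h1 := (mem_reesAlgebra_iff _ _).mp f.2 d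
    rwa [show max d 0 = d by omega]
  | succ e ih =>
    rw [pow_succ]
    calc _ ≤ DD k g' e * DD k g' 1 := Ideal.mul_mono ih (C_le_D1 k g')
      _ ≤ DD k g' (e + 1) := DD_mul k g' e 1

lemma monomial_mem_Iext {d : ℕ} {c : Rsub k g'} (hc : c ∈ mI k g' ^ (d + 1)) :
    ∃ hm : (Polynomial.monomial d c) ∈ reesAlgebra (mI k g'),
      (⟨Polynomial.monomial d c, hm⟩ : reesAlgebra (mI k g')) ∈
        Ideal.map (algebraMap (Rsub k g') (reesAlgebra (mI k g'))) (mI k g') := by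
  rw [pow_succ] at hc
  refine Submodule.mul_induction_on hc ?_ ?_
  · intro a ha b hb
    have hma : Polynomial.monomial d a ∈ reesAlgebra (mI k g') :=
      reesAlgebra.monomial_mem.mpr ha
    have hmab : Polynomial.monomial d (a * b) ∈ reesAlgebra (mI k g') :=
      reesAlgebra.monomial_mem.mpr (Ideal.mul_mem_right b _ ha)
    refine ⟨hmab, ?_⟩
    have heq : (⟨Polynomial.monomial d (a * b), hmab⟩ : reesAlgebra (mI k g')) =
        (algebraMap (Rsub k g') (reesAlgebra (mI k g'))) b *
          ⟨Polynomial.monomial d a, hma⟩ := by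
      apply Subtype.ext
      rw [MulMemClass.coe_mul]
      show Polynomial.monomial d (a * b) =
        Polynomial.C b * Polynomial.monomial d a
      rw [Polynomial.C_mul_monomial, mul_comm]
    rw [heq]
    exact Ideal.mul_mem_right _ _ (Ideal.mem_map_of_mem _ hb)
  · rintro x y ⟨hx, px⟩ ⟨hy, py⟩
    have hxy : Polynomial.monomial d (x + y) ∈ reesAlgebra (mI k g') := by
      rw [map_add]; exact add_mem hx hy
    refine ⟨hxy, ?_⟩
    have heq : (⟨Polynomial.monomial d (x + y), hxy⟩ : reesAlgebra (mI k g')) =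
        ⟨Polynomial.monomial d x, hx⟩ + ⟨Polynomial.monomial d y, hy⟩ := by
      apply Subtype.ext
      show Polynomial.monomial d (x + y) = Polynomial.monomial d x + Polynomial.monomial d y
      exact map_add _ _ _
    rw [heq]
    exact add_mem px py

lemma coeff_mem_imp_Iext (f : reesAlgebra (mI k g'))
    (h : ∀ d, ((f : (Rsub k g')[X])).coeff d ∈ mI k g' ^ (d + 1)) :
    f ∈ Ideal.map (algebraMap (Rsub k g') (reesAlgebra (mI k g'))) (mI k g') := by
  classical
  have hf : f = ∑ d ∈ (f : (Rsub k g')[X]).support,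
      (⟨Polynomial.monomial d ((f : (Rsub k g')[X]).coeff d), reesAlgebra.monomial_mem.mpr
        ((mem_reesAlgebra_iff _ _).mp f.2 d)⟩ : reesAlgebra (mI k g')) := by
    apply Subtype.ext
    rw [AddSubmonoidClass.coe_finset_sum]
    exact Polynomial.as_sum_support _
  rw [hf]
  refine Ideal.sum_mem _ fun d _ => ?_
  obtain ⟨hm, hmem⟩ := monomial_mem_Iext k g' (h d)
  exact hmem

/-- The ideal of elements of the Rees algebra whose coefficients have supports in the
appropriate `setM`. -/
def JJ (hg : MinGen g') (h0 : 0 < g' 0) : Ideal (reesAlgebra (mI k g')) where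
  carrier := {f | ∀ d, ((f : (Rsub k g')[X])).coeff d ∈ NN k g' (d + 1)}
  zero_mem' := by intro d; simp only [ZeroMemClass.coe_zero, Polynomial.coeff_zero]; exact zero_mem _
  add_mem' := by
    intro a b ha hb d
    rw [show ((a + b : reesAlgebra (mI k g')) : (Rsub k g')[X]) =
      (a : (Rsub k g')[X]) + (b : (Rsub k g')[X]) from rfl, Polynomial.coeff_add]
    exact add_mem (ha d) (hb d)
  smul_mem' := by
    intro cc x hx d
    rw [smul_eq_mul, show ((cc * x : reesAlgebra (mI k g')) : (Rsub k g')[X]) =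
      (cc : (Rsub k g')[X]) * (x : (Rsub k g')[X]) from rfl, Polynomial.coeff_mul]
    refine sum_mem fun p hp => ?_
    have hpc := Finset.HasAntidiagonal.mem_antidiagonal.mp hp
    have h1 : (cc : (Rsub k g')[X]).coeff p.1 ∈ NN k g' p.1 :=
      mI_pow_le_NN k g' hg h0 p.1 ((mem_reesAlgebra_iff _ _).mp cc.2 p.1)
    have h3 := NN_mul k g' h1 (hx p.2)
    rw [show p.1 + (p.2 + 1) = d + 1 by omega] at h3
    exact h3

lemma Iext_le_JJ (hg : MinGen g') (h0 : 0 < g' 0) :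
    Ideal.map (algebraMap (Rsub k g') (reesAlgebra (mI k g'))) (mI k g') ≤ JJ k g' hg h0 := by
  rw [Ideal.map_le_iff_le_comap]
  intro x hx
  rw [Ideal.mem_comap]
  intro d
  have hval : ((algebraMap (Rsub k g') (reesAlgebra (mI k g'))) x : (Rsub k g')[X]) =
      Polynomial.C x := rfl
  rw [hval, Polynomial.coeff_C]
  by_cases hd : d = 0
  · subst hd
    rw [if_pos rfl]
    have h1 : mI k g' ≤ NN k g' 1 := by
      have := mI_pow_le_NN k g' hg h0 1
      rwa [pow_one] at this
    exact h1 hx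
  · rw [if_neg hd]; exact zero_mem _

lemma tstar_ne_zero (hg : MinGen g') (h0 : 0 < g' 0) {v : ℕ} (hv : v ∈ S g') :
    tstar k g' v ≠ 0 := by
  intro hzero
  rw [tstar, Ideal.Quotient.eq_zero_iff_mem] at hzero
  have hJ := Iext_le_JJ k g' hg h0 hzero (ordS g' v)
  have hcoeff : ((((⟨(Polynomial.monomial (ordS g' v)) (tR k g' v),
      reesAlgebra.monomial_mem.mpr (tR_mem_pow k g' v)⟩ : reesAlgebra (mI k g'))) :
        (Rsub k g')[X])).coeff (ordS g' v) = tR k g' v := by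
    show (Polynomial.monomial (ordS g' v) (tR k g' v)).coeff (ordS g' v) = tR k g' v
    rw [Polynomial.coeff_monomial, if_pos rfl]
  rw [hcoeff] at hJ
  have h1 : v ∈ setM g' (ordS g' v + 1) := by
    apply hJ
    rw [tR_coe k g' hv, PowerSeries.coeff_monomial, if_pos rfl]
    exact one_ne_zero
  have h2 := le_ordS g' h1
  omega

lemma tstar_mul_eq {u s : ℕ} (hu : u ∈ S g') (hs : s ∈ S g')
    (hord : ordS g' u + ordS g' s = ordS g' (u + s)) :
    tstar k g' u * tstar k g' s = tstar k g' (u + s) := by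
  rw [tstar, tstar, tstar, ← map_mul]
  congr 1
  apply Subtype.ext
  rw [MulMemClass.coe_mul]
  show (Polynomial.monomial (ordS g' u)) (tR k g' u) *
      (Polynomial.monomial (ordS g' s)) (tR k g' s) =
    (Polynomial.monomial (ordS g' (u + s))) (tR k g' (u + s))
  rw [Polynomial.monomial_mul_monomial, hord, tR_mul k g' hu hs]

lemma tstar_mem_MM {s : ℕ} (hs : s ∈ S g') (hs0 : s ≠ 0) : tstar k g' s ∈ MM k g' := by
  rw [tstar]
  unfold MM
  apply Ideal.mem_map_of_mem
  rw [Ideal.mem_comap]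
  have hord : 1 ≤ ordS g' s := le_ordS g' (mem_setM_one g' hs hs0)
  have hval : ((Polynomial.evalRingHom (0 : Rsub k g')).comp
      (reesAlgebra (mI k g')).val.toRingHom)
      (⟨(Polynomial.monomial (ordS g' s)) (tR k g' s),
        reesAlgebra.monomial_mem.mpr (tR_mem_pow k g' s)⟩) = 0 := by
    show Polynomial.eval 0 ((Polynomial.monomial (ordS g' s)) (tR k g' s)) = 0
    rw [Polynomial.eval_monomial, zero_pow (by omega : ordS g' s ≠ 0), mul_zero]
  rw [hval]
  exact zero_mem _

lemma tstar_mem_annM (hg : MinGen g') (h0 : 0 < g' 0) {i : ℕ} (hi : i < g' 0)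
    (hab : bb g' i < aa g' i) : tstar k g' (ap g' i) ∈ annM k g' := by
  unfold annM
  rw [Submodule.mem_colon]
  intro p hp
  unfold MM at hp
  rw [SetLike.mem_coe] at hp
  replace hp : p ∈ Ideal.map (Ideal.Quotient.mk
      (Ideal.map (algebraMap (Rsub k g') (reesAlgebra (mI k g'))) (mI k g')))
      ((Ideal.comap ((Polynomial.evalRingHom (0 : Rsub k g')).comp
        (reesAlgebra (mI k g')).val.toRingHom) (mI k g')) ^ rnum k g') := by
    convert hp using 1
    exact Ideal.map_pow (Ideal.Quotient.mk
      (Ideal.map (algebraMap (Rsub k g') (reesAlgebra (mI k g'))) (mI k g'))) _ _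
  obtain ⟨y, hy, rfl⟩ :=
    (Ideal.mem_map_iff_of_surjective _ Ideal.Quotient.mk_surjective).mp hp
  rw [smul_eq_mul, tstar, ← map_mul, Submodule.mem_bot, Ideal.Quotient.eq_zero_iff_mem]
  apply coeff_mem_imp_Iext
  intro d
  have hyD : y ∈ DD k g' (rnum k g') := C_pow_le_D k g' (rnum k g') hy
  rw [show (((⟨(Polynomial.monomial (ordS g' (ap g' i))) (tR k g' (ap g' i)),
      reesAlgebra.monomial_mem.mpr (tR_mem_pow k g' (ap g' i))⟩ *
        y : reesAlgebra (mI k g'))) : (Rsub k g')[X]) =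
    (Polynomial.monomial (ordS g' (ap g' i))) (tR k g' (ap g' i)) * (y : (Rsub k g')[X])
    from rfl, Polynomial.coeff_mul]
  refine Ideal.sum_mem _ fun p hp2 => ?_
  have hpc := Finset.HasAntidiagonal.mem_antidiagonal.mp hp2
  rw [Polynomial.coeff_monomial]
  by_cases hb : ordS g' (ap g' i) = p.1
  · rw [if_pos hb]
    have hbb : bb g' i = ordS g' (ap g' i) := rfl
    have hkey := key_mul k g' hg h0 hi hab
      (show rnum k g' ≤ max p.2 (rnum k g') by omega) (hyD p.2)
    rw [show max p.2 (rnum k g') = max p.2 (rnum k g') from rfl] at hkey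
    refine Ideal.pow_le_pow_right (by omega) hkey
  · rw [if_neg hb, zero_mul]
    exact zero_mem _

end RingAux

/-- Proposition 14. Assume `G(m)` is Buchsbaum. If `i` is an
index with `a_i > b_i`, then `ω_i ∈ maxAp_M(S)`, i.e. `ω_i` is a maximal
element of the Apery set `Ap_{g_1}(S)` with respect to `≤_M`. -/
theorem statement11 {k : Type*} [Field k] [Infinite k] {n : ℕ} (g : Fin (n + 1) → ℕ)
    (hg : MinGen g) (hB : IsBuchsbaum k g) (i : ℕ) (hi : i < g 0)
    (hab : bb g i < aa g i) :
    ap g i ∈ maxAp g := by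
  have h0 : 0 < g 0 := by omega
  refine ⟨⟨i, hi, rfl⟩, ?_⟩
  rintro v ⟨j, hj, rfl⟩ ⟨s, hsS, hsum, hord⟩
  by_cases hs0 : s = 0
  · subst hs0; omega
  · exfalso
    have hvS : ap g j ∈ S g := (ap_spec g hg hj).1
    have hord' : ordS g (ap g i) + ordS g s = ordS g (ap g i + s) := by
      rw [hsum]; exact hord
    have hmul := tstar_mul_eq k g (ap_spec g hg hi).1 hsS hord'
    have hannM := tstar_mem_annM k g hg h0 hi hab
    have hB' : ann1 k g = annM k g := hB
    rw [← hB'] at hannM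
    unfold ann1 at hannM
    have hz := Submodule.mem_colon.mp hannM _ (tstar_mem_MM k g hsS hs0)
    rw [smul_eq_mul, Submodule.mem_bot] at hz
    rw [hmul, hsum] at hz
    exact tstar_ne_zero k g hg h0 hvS hz

end NumSgrp
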